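/- Every open subset 𝒰 of E^∞ is strategically Ramsey. -/

import Mathlib

section Defs

variable {𝔽 : Type} [Field 𝔽] {E : Type} [AddCommGroup E] [Module 𝔽 E]

/-- The support of a vector with respect to the basis `b`. -/
noncomputable def supp (b : Module.Basis ℕ 𝔽 E) (x : E) : Finset ℕ :=
  (b.repr x).support

/-- `VecLt b x y` means `x < y`: every element of the support of `x` is smaller than
every element of the support of `y`. -/
def VecLt (b : Module.Basis ℕ 𝔽 E) (x y : E) : Prop :=
  ∀ m ∈ supp b x, ∀ n ∈ supp b y, m < n

/-- `NatLt b k x` means `k < x`: `k` is smaller than every element of the support of `x`. -/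
def NatLt (b : Module.Basis ℕ 𝔽 E) (k : ℕ) (x : E) : Prop :=
  ∀ n ∈ supp b x, k < n

/-- An infinite block sequence: a sequence of nonzero vectors with `x n < x (n + 1)`. -/
def IsBlockSeq (b : Module.Basis ℕ 𝔽 E) (x : ℕ → E) : Prop :=
  (∀ n, x n ≠ 0) ∧ ∀ n, VecLt b (x n) (x (n + 1))

/-- A finite block sequence: a list of nonzero vectors, consecutively increasing in the
block ordering. -/
def IsFinBlockSeq (b : Module.Basis ℕ 𝔽 E) (l : List E) : Prop :=
  (∀ x ∈ l, x ≠ 0) ∧ l.Chain' (VecLt b)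

/-- A block subspace: a subspace spanned by an infinite block sequence. -/
def IsBlockSubspace (b : Module.Basis ℕ 𝔽 E) (X : Submodule 𝔽 E) : Prop :=
  ∃ y : ℕ → E, IsBlockSeq b y ∧ X = Submodule.span 𝔽 (Set.range y)

/-- The list of the first `n` values of a sequence. -/
def hist {α : Type _} (x : ℕ → α) (n : ℕ) : List α :=
  List.ofFn (fun j : Fin n => x j)

/-- The concatenation of a finite prefix with an infinite sequence. -/
def prefCat {α : Type _} (l : List α) (x : ℕ → α) : ℕ → α := fun n =>
  if h : n < l.length then l.get ⟨n, h⟩ else x (n - l.length)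

/-- Player II has a strategy in Gowers' game `G_X(pre)` below `X` to play in `A`:
player I plays infinite-dimensional subspaces `Y i ≤ X`, player II answers with a
nonzero vector of `Y i`, the vectors played by II forming a block sequence, and the
outcome (the prefix `pre` followed by II's vectors) lies in `A`. -/
def IIWinsG (b : Module.Basis ℕ 𝔽 E) (X : Submodule 𝔽 E) (pre : List E) (A : Set (ℕ → E)) :
    Prop :=
  ∃ σ : List (Submodule 𝔽 E) → E,
    ∀ Y : ℕ → Submodule 𝔽 E,
      (∀ i, Y i ≤ X ∧ ¬FiniteDimensional 𝔽 ↥(Y i)) →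
      (∀ i, σ (hist Y (i + 1)) ∈ Y i ∧ σ (hist Y (i + 1)) ≠ 0 ∧
          VecLt b (σ (hist Y (i + 1))) (σ (hist Y (i + 2)))) ∧
        prefCat pre (fun i => σ (hist Y (i + 1))) ∈ A

/-- Player I has a strategy in the infinite asymptotic game `F_X(pre)` below `X` to play
in `A`: player I plays strictly increasing natural numbers `n i`, player II answers with
nonzero vectors of `X` with `n i < x i` forming a block sequence, and the outcome
(the prefix `pre` followed by II's vectors) lies in `A`. -/
def IWinsF (b : Module.Basis ℕ 𝔽 E) (X : Submodule 𝔽 E) (pre : List E) (A : Set (ℕ → E)) :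
    Prop :=
  ∃ σ : List E → ℕ,
    ∀ x : ℕ → E,
      (∀ i, x i ∈ X ∧ x i ≠ 0 ∧ NatLt b (σ (hist x i)) (x i) ∧
          VecLt b (x i) (x (i + 1))) →
      (∀ i, σ (hist x i) < σ (hist x (i + 1))) ∧ prefCat pre x ∈ A

/-- A set `A ⊆ E^∞` is strategically Ramsey if for every block subspace `V` and every
finite block sequence `z`, there is a block subspace `W ≤ V` such that either II has a
strategy in `G_W(z)` to play in `A`, or I has a strategy in `F_W(z)` to play in `Aᶜ`. -/
def StrategicallyRamsey (b : Module.Basis ℕ 𝔽 E) (A : Set (ℕ → E)) : Prop :=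
  ∀ V : Submodule 𝔽 E, IsBlockSubspace b V → ∀ z : List E, IsFinBlockSeq b z →
    ∃ W : Submodule 𝔽 E, W ≤ V ∧ IsBlockSubspace b W ∧
      (IIWinsG b W z A ∨ IWinsF b W z Aᶜ)

end Defs

section Basics

open Submodule Set

variable {𝔽 : Type} [Field 𝔽] {E : Type} [AddCommGroup E] [Module 𝔽 E]

theorem supp_zero (b : Module.Basis ℕ 𝔽 E) : supp b (0 : E) = ∅ := by
  simp [supp]

theorem supp_nonempty (b : Module.Basis ℕ 𝔽 E) {x : E} (hx : x ≠ 0) : (supp b x).Nonempty := by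
  rw [Finset.nonempty_iff_ne_empty]
  intro h
  apply hx
  have h0 : b.repr x = 0 := by
    rwa [← Finsupp.support_eq_empty]
  exact (LinearEquiv.map_eq_zero_iff b.repr).mp h0

/-- `msup b x` is a bound for the support of `x`. -/
noncomputable def msup (b : Module.Basis ℕ 𝔽 E) (x : E) : ℕ := (supp b x).sup id

theorem le_msup (b : Module.Basis ℕ 𝔽 E) {x : E} {k : ℕ} (hk : k ∈ supp b x) : k ≤ msup b x :=
  Finset.le_sup (f := id) hk

theorem natLt_mono (b : Module.Basis ℕ 𝔽 E) {m n : ℕ} {x : E} (h : m ≤ n) (hx : NatLt b n x) :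
    NatLt b m x := fun k hk => lt_of_le_of_lt h (hx k hk)

theorem vecLt_of_natLt_msup (b : Module.Basis ℕ 𝔽 E) {x y : E} (h : NatLt b (msup b x) y) :
    VecLt b x y := fun m hm n hn => lt_of_le_of_lt (le_msup b hm) (h n hn)

/-- The submodule of vectors with support above `n`. -/
def cut (b : Module.Basis ℕ 𝔽 E) (n : ℕ) : Submodule 𝔽 E where
  carrier := {v | NatLt b n v}
  zero_mem' := by intro k hk; rw [supp_zero] at hk; exact absurd hk (Finset.notMem_empty k)
  add_mem' := by
    intro x y hx hy k hk
    have : k ∈ supp b x ∪ supp b y := by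
      have hsub : (b.repr (x + y)).support ⊆ (b.repr x).support ∪ (b.repr y).support := by
        rw [map_add]
        exact Finsupp.support_add
      exact hsub hk
    rcases Finset.mem_union.mp this with h | h
    · exact hx k h
    · exact hy k h
  smul_mem' := by
    intro c x hx k hk
    apply hx
    have hsub : (b.repr (c • x)).support ⊆ (b.repr x).support := by
      rw [map_smul]
      exact Finsupp.support_smul
    exact hsub hk

theorem mem_cut (b : Module.Basis ℕ 𝔽 E) {n : ℕ} {v : E} : v ∈ cut b n ↔ NatLt b n v := Iff.rfl

theorem IsBlockSeq.vecLt_of_lt {b : Module.Basis ℕ 𝔽 E} {u : ℕ → E} (hu : IsBlockSeq b u)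
    {i j : ℕ} (hij : i < j) : VecLt b (u i) (u j) := by
  induction j with
  | zero => omega
  | succ j ih =>
    rcases Nat.lt_succ_iff_lt_or_eq.mp hij with h | h
    · intro m hm n hn
      obtain ⟨k, hk⟩ := supp_nonempty b (hu.1 j)
      exact lt_trans (ih h m hm k hk) (hu.2 j k hk n hn)
    · subst h; exact hu.2 i

theorem IsBlockSeq.le_supp {b : Module.Basis ℕ 𝔽 E} {u : ℕ → E} (hu : IsBlockSeq b u) :
    ∀ j, ∀ k ∈ supp b (u j), j ≤ k := by
  intro j
  induction j with
  | zero => intro k _; exact Nat.zero_le k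
  | succ j ih =>
    intro k hk
    obtain ⟨k', hk'⟩ := supp_nonempty b (hu.1 j)
    have := hu.2 j k' hk' k hk
    have := ih k' hk'
    omega

theorem IsBlockSeq.linearIndependent {b : Module.Basis ℕ 𝔽 E} {u : ℕ → E} (hu : IsBlockSeq b u) :
    LinearIndependent 𝔽 u := by
  rw [linearIndependent_iff']
  intro s g hsum i hi
  by_contra hgi
  classical
  set t := s.filter (fun j => g j ≠ 0) with ht
  have hne : t.Nonempty := ⟨i, Finset.mem_filter.mpr ⟨hi, hgi⟩⟩
  set j₀ := t.min' hne with hj₀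
  have hj₀t : j₀ ∈ t := t.min'_mem hne
  have hj₀s : j₀ ∈ s := (Finset.mem_filter.mp hj₀t).1
  have hgj₀ : g j₀ ≠ 0 := (Finset.mem_filter.mp hj₀t).2
  obtain ⟨k₀, hk₀⟩ := supp_nonempty b (hu.1 j₀)
  have hrepr : b.repr (∑ i ∈ s, g i • u i) k₀ = ∑ i ∈ s, g i * b.repr (u i) k₀ := by
    rw [map_sum]
    rw [Finsupp.finset_sum_apply]
    apply Finset.sum_congr rfl
    intro j _
    rw [map_smul, Finsupp.smul_apply, smul_eq_mul]
  have hsingle : ∑ i ∈ s, g i * b.repr (u i) k₀ = g j₀ * b.repr (u j₀) k₀ := by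
    apply Finset.sum_eq_single j₀
    · intro j hjs hjne
      by_cases hgj : g j = 0
      · rw [hgj, zero_mul]
      · have hjt : j ∈ t := Finset.mem_filter.mpr ⟨hjs, hgj⟩
        have hlt : j₀ < j := lt_of_le_of_ne (t.min'_le j hjt) (Ne.symm hjne)
        have hvl := hu.vecLt_of_lt hlt
        have : b.repr (u j) k₀ = 0 := by
          by_contra hne0
          have : k₀ ∈ supp b (u j) := Finsupp.mem_support_iff.mpr hne0
          exact absurd (hvl k₀ hk₀ k₀ this) (lt_irrefl k₀)
        rw [this, mul_zero]
    · intro h; exact absurd hj₀s h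
  rw [hsum] at hrepr
  simp only [map_zero, Finsupp.coe_zero, Pi.zero_apply] at hrepr
  rw [hsingle] at hrepr
  have : b.repr (u j₀) k₀ ≠ 0 := Finsupp.mem_support_iff.mp hk₀
  exact this (by
    rcases mul_eq_zero.mp hrepr.symm with h | h
    · exact absurd h hgj₀
    · exact h)

end Basics
section Dim

open Submodule Set

variable {𝔽 : Type} [Field 𝔽] {E : Type} [AddCommGroup E] [Module 𝔽 E]

theorem infdim_exists_highvec (b : Module.Basis ℕ 𝔽 E) (Z : Submodule 𝔽 E)
    (hZ : ¬FiniteDimensional 𝔽 Z) (n : ℕ) : ∃ v, v ∈ Z ∧ v ≠ 0 ∧ NatLt b n v := by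
  by_contra hcon
  push_neg at hcon
  apply hZ
  let φ : Z →ₗ[𝔽] (Fin (n + 1) → 𝔽) :=
    { toFun := fun v => fun k => b.repr v.1 k.1
      map_add' := by intro v w; funext k; simp [map_add]
      map_smul' := by intro c v; funext k; simp [map_smul] }
  apply FiniteDimensional.of_injective φ
  intro v w hvw
  have hsub : φ (v - w) = 0 := by rw [map_sub, hvw, sub_self]
  have hnat : NatLt b n ((v : E) - w) := by
    intro k hk
    by_contra hlt
    push_neg at hlt
    have hk1 : k < n + 1 := by omega
    have : b.repr ((v : E) - w) k = 0 := by
      have := congrFun hsub ⟨k, hk1⟩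
      simpa [φ] using this
    exact (Finsupp.mem_support_iff.mp hk) this
  have hmem : (v : E) - w ∈ Z := sub_mem v.2 w.2
  have : (v : E) - w = 0 := by
    by_contra hne
    exact hcon _ hmem hne hnat
  have : (v : E) = w := by
    have := sub_eq_zero.mp this
    exact this
  exact Subtype.ext this

/-- Inside any infinite-dimensional subspace there is a block sequence with supports
above `n`. -/
theorem infdim_exists_blockseq (b : Module.Basis ℕ 𝔽 E) (Z : Submodule 𝔽 E)
    (hZ : ¬FiniteDimensional 𝔽 Z) (n : ℕ) :
    ∃ u : ℕ → E, IsBlockSeq b u ∧ (∀ j, u j ∈ Z) ∧ ∀ j, NatLt b n (u j) := by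
  classical
  let f : ℕ → E := fun j =>
    Nat.rec ((infdim_exists_highvec b Z hZ n).choose)
      (fun _ prev => (infdim_exists_highvec b Z hZ (max n (msup b prev))).choose) j
  have hf0 : f 0 ∈ Z ∧ f 0 ≠ 0 ∧ NatLt b n (f 0) :=
    (infdim_exists_highvec b Z hZ n).choose_spec
  have hfs : ∀ j, f (j + 1) ∈ Z ∧ f (j + 1) ≠ 0 ∧ NatLt b (max n (msup b (f j))) (f (j + 1)) :=
    fun j => (infdim_exists_highvec b Z hZ (max n (msup b (f j)))).choose_spec
  refine ⟨f, ⟨?_, ?_⟩, ?_, ?_⟩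
  · intro j; cases j with
    | zero => exact hf0.2.1
    | succ j => exact (hfs j).2.1
  · intro j
    apply vecLt_of_natLt_msup
    exact natLt_mono b (le_max_right _ _) (hfs j).2.2
  · intro j; cases j with
    | zero => exact hf0.1
    | succ j => exact (hfs j).1
  · intro j; cases j with
    | zero => exact hf0.2.2
    | succ j => exact natLt_mono b (le_max_left _ _) (hfs j).2.2

theorem isBlockSubspace_span (b : Module.Basis ℕ 𝔽 E) {u : ℕ → E} (hu : IsBlockSeq b u) :
    IsBlockSubspace b (Submodule.span 𝔽 (Set.range u)) := ⟨u, hu, rfl⟩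

theorem isBlockSubspace_infdim (b : Module.Basis ℕ 𝔽 E) {X : Submodule 𝔽 E}
    (hX : IsBlockSubspace b X) : ¬FiniteDimensional 𝔽 X := by
  obtain ⟨u, hu, rfl⟩ := hX
  intro hfin
  have hmem : ∀ j, u j ∈ Submodule.span 𝔽 (Set.range u) := fun j =>
    Submodule.subset_span ⟨j, rfl⟩
  have hli : LinearIndependent 𝔽 (fun j => (⟨u j, hmem j⟩ : Submodule.span 𝔽 (Set.range u))) := by
    apply LinearIndependent.of_comp (Submodule.span 𝔽 (Set.range u)).subtype
    have : ((Submodule.span 𝔽 (Set.range u)).subtype ∘ fun j =>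
        (⟨u j, hmem j⟩ : Submodule.span 𝔽 (Set.range u))) = u := rfl
    rw [this]
    exact hu.linearIndependent
  have := hli.lt_aleph0_of_finite
  simp at this

/-- Inside any infinite-dimensional subspace there is a block subspace with supports
above `n`. -/
theorem infdim_exists_blockSubspace (b : Module.Basis ℕ 𝔽 E) (Z : Submodule 𝔽 E)
    (hZ : ¬FiniteDimensional 𝔽 Z) (n : ℕ) :
    ∃ C : Submodule 𝔽 E, IsBlockSubspace b C ∧ C ≤ Z ∧ C ≤ cut b n := by
  obtain ⟨u, hu, humem, hun⟩ := infdim_exists_blockseq b Z hZ n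
  refine ⟨Submodule.span 𝔽 (Set.range u), isBlockSubspace_span b hu, ?_, ?_⟩
  · rw [Submodule.span_le]
    rintro v ⟨j, rfl⟩
    exact humem j
  · rw [Submodule.span_le]
    rintro v ⟨j, rfl⟩
    exact hun j

theorem infdim_inf_cut (b : Module.Basis ℕ 𝔽 E) (Z : Submodule 𝔽 E)
    (hZ : ¬FiniteDimensional 𝔽 Z) (n : ℕ) : ¬FiniteDimensional 𝔽 (Z ⊓ cut b n : Submodule 𝔽 E) := by
  obtain ⟨u, hu, humem, hun⟩ := infdim_exists_blockseq b Z hZ n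
  intro hfin
  have hmem : ∀ j, u j ∈ Z ⊓ cut b n := fun j => ⟨humem j, hun j⟩
  have hli : LinearIndependent 𝔽 (fun j => (⟨u j, hmem j⟩ : (Z ⊓ cut b n : Submodule 𝔽 E))) := by
    apply LinearIndependent.of_comp (Z ⊓ cut b n).subtype
    have : ((Z ⊓ cut b n).subtype ∘ fun j => (⟨u j, hmem j⟩ : (Z ⊓ cut b n : Submodule 𝔽 E))) = u := rfl
    rw [this]
    exact hu.linearIndependent
  have := hli.lt_aleph0_of_finite
  simp at this

end Dim
section ListLemmas

open Submodule Set

variable {𝔽 : Type} [Field 𝔽] {E : Type} [AddCommGroup E] [Module 𝔽 E]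

theorem hist_zero {α : Type _} (x : ℕ → α) : hist x 0 = [] := rfl

theorem hist_length {α : Type _} (x : ℕ → α) (n : ℕ) : (hist x n).length = n := by
  simp [hist]

theorem hist_succ {α : Type _} (x : ℕ → α) (n : ℕ) :
    hist x (n + 1) = hist x n ++ [x n] := by
  simp only [hist]
  rw [List.ofFn_succ']
  simp [List.concat_eq_append]

theorem hist_succ_head {α : Type _} (x : ℕ → α) (n : ℕ) :
    hist x (n + 1) = x 0 :: hist (fun j => x (j + 1)) n := by
  simp only [hist]
  rw [List.ofFn_succ]
  rfl

theorem hist_map {α β : Type _} (g : α → β) (x : ℕ → α) (n : ℕ) :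
    (hist x n).map g = hist (fun j => g (x j)) n := by
  simp [hist, List.map_ofFn]
  rfl

theorem hist_reverse_succ {α : Type _} (x : ℕ → α) (n : ℕ) :
    (hist x (n + 1)).reverse = x n :: (hist x n).reverse := by
  rw [hist_succ]
  simp

theorem hist_getElem {α : Type _} (x : ℕ → α) (n : ℕ) (j : ℕ) (h : j < (hist x n).length) :
    (hist x n)[j] = x j := by
  simp [hist]

/-- Prepend one element to a sequence. -/
def scons {α : Type _} (y : α) (f : ℕ → α) : ℕ → α := fun n => Nat.casesOn n y f

theorem prefCat_snoc {α : Type _} (l : List α) (y : α) (f : ℕ → α) :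
    prefCat (l ++ [y]) f = prefCat l (scons y f) := by
  funext n
  simp only [prefCat, List.length_append, List.length_cons, List.length_nil]
  rcases lt_trichotomy n l.length with h | h | h
  · rw [dif_pos (by omega), dif_pos h]
    simp only [List.get_eq_getElem]
    rw [List.getElem_append_left h]
  · subst h
    rw [dif_pos (by omega), dif_neg (by omega)]
    simp only [List.get_eq_getElem]
    rw [List.getElem_append_right (le_refl _)]
    simp [scons]
  · rw [dif_neg (by omega), dif_neg (by omega)]
    have : n - l.length = (n - (l.length + 1)) + 1 := by omega
    rw [this]
    rfl

theorem prefCat_lt {α : Type _} (l : List α) (f : ℕ → α) {n : ℕ} (h : n < l.length) :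
    prefCat l f n = l[n] := by
  simp [prefCat, dif_pos h]

theorem prefCat_ge {α : Type _} (l : List α) (f : ℕ → α) {n : ℕ} (h : l.length ≤ n) :
    prefCat l f n = f (n - l.length) := by
  simp [prefCat, dif_neg (by omega : ¬ n < l.length)]

/-- The key "coordinates" lemma: a vector of a block subspace whose support lies
above the supports of the first `m` generators lies in the span of the later
generators. -/
theorem mem_span_tail (b : Module.Basis ℕ 𝔽 E) {u : ℕ → E} (hu : IsBlockSeq b u) {v : E}
    (hv : v ∈ Submodule.span 𝔽 (Set.range u)) {n m : ℕ}
    (hbound : ∀ j, j < m → msup b (u j) ≤ n) (hhigh : NatLt b n v) :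
    v ∈ Submodule.span 𝔽 (u '' Set.Ici m) := by
  classical
  obtain ⟨c, hc⟩ := Finsupp.mem_span_range_iff_exists_finsupp.mp hv
  have hzero : ∀ j, j < m → c j = 0 := by
    intro j hj
    by_contra hcj
    obtain ⟨k₀, hk₀⟩ := supp_nonempty b (hu.1 j)
    have hjsup : j ∈ c.support := Finsupp.mem_support_iff.mpr hcj
    have hrepr : b.repr v k₀ = ∑ i ∈ c.support, c i * b.repr (u i) k₀ := by
      rw [← hc, map_finsuppSum]
      rw [Finsupp.sum_apply]
      apply Finset.sum_congr rfl
      intro i _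
      simp only [map_smul, Finsupp.smul_apply, smul_eq_mul]
    have hsingle : ∑ i ∈ c.support, c i * b.repr (u i) k₀ = c j * b.repr (u j) k₀ := by
      apply Finset.sum_eq_single j
      · intro i his hine
        have : b.repr (u i) k₀ = 0 := by
          by_contra hne0
          have hki : k₀ ∈ supp b (u i) := Finsupp.mem_support_iff.mpr hne0
          rcases lt_or_gt_of_ne hine with h | h
          · exact absurd ((hu.vecLt_of_lt h) k₀ hki k₀ hk₀) (lt_irrefl k₀)
          · exact absurd ((hu.vecLt_of_lt h) k₀ hk₀ k₀ hki) (lt_irrefl k₀)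
        rw [this, mul_zero]
      · intro h; exact absurd hjsup h
    have hne : b.repr v k₀ ≠ 0 := by
      rw [hrepr, hsingle]
      exact mul_ne_zero hcj (Finsupp.mem_support_iff.mp hk₀)
    have hk₀v : k₀ ∈ supp b v := Finsupp.mem_support_iff.mpr hne
    have := hhigh k₀ hk₀v
    have := hbound j hj
    have := le_msup b hk₀
    omega
  rw [← hc]
  rw [Finsupp.sum]
  apply Submodule.sum_mem
  intro i hi
  apply Submodule.smul_mem
  apply Submodule.subset_span
  refine ⟨i, ?_, rfl⟩
  simp only [Set.mem_Ici]
  by_contra h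
  push_neg at h
  exact (Finsupp.mem_support_iff.mp hi) (hzero i h)

end ListLemmas
section Games

open Submodule Set

variable {𝔽 : Type} [Field 𝔽] {E : Type} [AddCommGroup E] [Module 𝔽 E]

/-- Winning for II passes to smaller subspaces. -/
theorem IIWinsG.mono {b : Module.Basis ℕ 𝔽 E} {X Y : Submodule 𝔽 E} {p : List E} {A : Set (ℕ → E)}
    (h : IIWinsG b X p A) (hYX : Y ≤ X) : IIWinsG b Y p A := by
  obtain ⟨σ, hσ⟩ := h
  exact ⟨σ, fun Z hZ => hσ Z (fun i => ⟨le_trans (hZ i).1 hYX, (hZ i).2⟩)⟩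

/-- If II wins below `X'` and every subspace of `W` cut above `N` lands in `X'`,
then II wins below `W` (by trimming the opponent's moves). -/
theorem IIWinsG.of_cut {b : Module.Basis ℕ 𝔽 E} {X' W : Submodule 𝔽 E} {p : List E} {A : Set (ℕ → E)}
    (h : IIWinsG b X' p A) (N : ℕ)
    (hX : ∀ Z : Submodule 𝔽 E, Z ≤ W → Z ⊓ cut b N ≤ X') : IIWinsG b W p A := by
  obtain ⟨σ, hσ⟩ := h
  refine ⟨fun l => σ (l.map (fun Z => Z ⊓ cut b N)), fun Y hY => ?_⟩
  set Y' : ℕ → Submodule 𝔽 E := fun i => Y i ⊓ cut b N with hY'def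
  have hY' : ∀ i, Y' i ≤ X' ∧ ¬FiniteDimensional 𝔽 (Y' i) := fun i =>
    ⟨hX _ (hY i).1, infdim_inf_cut b _ (hY i).2 N⟩
  have hrw : ∀ k, (hist Y k).map (fun Z => Z ⊓ cut b N) = hist Y' k := fun k =>
    hist_map _ Y k
  obtain ⟨hcond, hout⟩ := hσ Y' hY'
  have heval : ∀ k, (fun l => σ (l.map (fun Z => Z ⊓ cut b N))) (hist Y k) =
      σ (hist Y' k) := by
    intro k
    simp only []
    rw [hrw]
  constructor
  · intro i
    rw [heval, heval]
    obtain ⟨h1, h2, h3⟩ := hcond i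
    exact ⟨(inf_le_left : Y i ⊓ cut b N ≤ Y i) h1, h2, h3⟩
  · have : (fun i => (fun l => σ (l.map (fun Z => Z ⊓ cut b N))) (hist Y (i + 1))) =
        (fun i => σ (hist Y' (i + 1))) := by
      funext i; exact heval (i + 1)
    rw [this]
    exact hout

open Classical in
/-- The fallback strategy: pick any legal vector. -/
noncomputable def fbAux (b : Module.Basis ℕ 𝔽 E) : List (Submodule 𝔽 E) → E × ℕ
  | [] => (0, 0)
  | Z :: t =>
    let prev := fbAux b t
    if h : ∃ v, v ∈ Z ∧ v ≠ 0 ∧ NatLt b prev.2 v then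
      (h.choose, max prev.2 (msup b h.choose) + 1)
    else (0, prev.2)

/-- If every extension of `p` is in `A`, then II wins trivially. -/
theorem iiwins_of_cyl (b : Module.Basis ℕ 𝔽 E) (X : Submodule 𝔽 E) (p : List E) (A : Set (ℕ → E))
    (hcyl : ∀ f : ℕ → E, prefCat p f ∈ A) : IIWinsG b X p A := by
  classical
  refine ⟨fun l => (fbAux b l.reverse).1, fun Y hY => ?_⟩
  have key : ∀ i, (fbAux b (hist Y (i + 1)).reverse).1 ∈ Y i ∧
      (fbAux b (hist Y (i + 1)).reverse).1 ≠ 0 ∧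
      NatLt b (fbAux b (hist Y i).reverse).2 (fbAux b (hist Y (i + 1)).reverse).1 ∧
      msup b (fbAux b (hist Y (i + 1)).reverse).1 < (fbAux b (hist Y (i + 1)).reverse).2 ∧
      (fbAux b (hist Y i).reverse).2 ≤ (fbAux b (hist Y (i + 1)).reverse).2 := by
    intro i
    rw [hist_reverse_succ]
    set prev := fbAux b (hist Y i).reverse with hprev
    have hex : ∃ v, v ∈ Y i ∧ v ≠ 0 ∧ NatLt b prev.2 v :=
      infdim_exists_highvec b (Y i) (hY i).2 prev.2
    simp only [fbAux, ← hprev, dif_pos hex]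
    obtain ⟨h1, h2, h3⟩ := hex.choose_spec
    exact ⟨h1, h2, h3, by omega, by omega⟩
  constructor
  · intro i
    refine ⟨(key i).1, (key i).2.1, ?_⟩
    apply vecLt_of_natLt_msup
    have h1 := (key (i + 1)).2.2.1
    have h2 := (key i).2.2.2.1
    exact natLt_mono b (le_of_lt h2) h1
  · exact hcyl _

/-- One-step composition: if in every infinite-dimensional subspace of `X` there is a
vector `y` such that II wins `G_X(p ++ [y])`, then II wins `G_X(p)`. -/
theorem iiwins_of_dense (b : Module.Basis ℕ 𝔽 E) (X : Submodule 𝔽 E) (p : List E) (A : Set (ℕ → E))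
    (hd : ∀ Z : Submodule 𝔽 E, Z ≤ X → ¬FiniteDimensional 𝔽 Z →
      ∃ y, y ∈ Z ∧ y ≠ 0 ∧ IIWinsG b X (p ++ [y]) A) :
    IIWinsG b X p A := by
  classical
  have hch : ∀ Z : Submodule 𝔽 E, ∃ y : E, Z ≤ X → ¬FiniteDimensional 𝔽 Z →
      y ∈ Z ∧ y ≠ 0 ∧ IIWinsG b X (p ++ [y]) A := by
    intro Z
    by_cases h : Z ≤ X ∧ ¬FiniteDimensional 𝔽 Z
    · obtain ⟨y, hy⟩ := hd Z h.1 h.2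
      exact ⟨y, fun _ _ => hy⟩
    · exact ⟨0, fun h1 h2 => absurd ⟨h1, h2⟩ h⟩
  choose F hFspec using hch
  have hch2 : ∀ Z : Submodule 𝔽 E, ∃ τ : List (Submodule 𝔽 E) → E,
      Z ≤ X → ¬FiniteDimensional 𝔽 Z →
      ∀ Y' : ℕ → Submodule 𝔽 E, (∀ i, Y' i ≤ X ∧ ¬FiniteDimensional 𝔽 (Y' i)) →
        (∀ i, τ (hist Y' (i + 1)) ∈ Y' i ∧ τ (hist Y' (i + 1)) ≠ 0 ∧
            VecLt b (τ (hist Y' (i + 1))) (τ (hist Y' (i + 2)))) ∧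
          prefCat (p ++ [F Z]) (fun i => τ (hist Y' (i + 1))) ∈ A := by
    intro Z
    by_cases h : Z ≤ X ∧ ¬FiniteDimensional 𝔽 Z
    · obtain ⟨τ, hτ⟩ := (hFspec Z h.1 h.2).2.2
      exact ⟨τ, fun _ _ => hτ⟩
    · exact ⟨fun _ => 0, fun h1 h2 => absurd ⟨h1, h2⟩ h⟩
  choose σs hσs using hch2
  refine ⟨fun l => match l with
    | [] => 0
    | Z₀ :: rest =>
        if rest.isEmpty then F Z₀
        else σs Z₀ (rest.map (fun Z => Z ⊓ cut b (msup b (F Z₀)))), fun Y hY => ?_⟩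
  obtain ⟨hymem, hyne, -⟩ := hFspec (Y 0) (hY 0).1 (hY 0).2
  set Y' : ℕ → Submodule 𝔽 E := fun j => Y (j + 1) ⊓ cut b (msup b (F (Y 0))) with hY'def
  have hY' : ∀ i, Y' i ≤ X ∧ ¬FiniteDimensional 𝔽 (Y' i) := fun i =>
    ⟨le_trans inf_le_left (hY (i + 1)).1, infdim_inf_cut b _ (hY (i + 1)).2 _⟩
  obtain ⟨hmcond, hmout⟩ := hσs (Y 0) (hY 0).1 (hY 0).2 Y' hY'
  have hg : ∀ i, (fun l => match l with
      | [] => (0 : E)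
      | Z₀ :: rest =>
          if rest.isEmpty then F Z₀
          else σs Z₀ (rest.map (fun Z => Z ⊓ cut b (msup b (F Z₀))))) (hist Y (i + 1)) =
      scons (F (Y 0)) (fun i => σs (Y 0) (hist Y' (i + 1))) i := by
    intro i
    cases i with
    | zero =>
      rw [hist_succ_head]
      simp only [hist_zero]
      rfl
    | succ i =>
      rw [hist_succ_head]
      have hne : ¬((hist (fun j => Y (j + 1)) (i + 1)).isEmpty = true) := by
        intro h
        have h2 := List.isEmpty_iff.mp h
        have h3 := hist_length (fun j => Y (j + 1)) (i + 1)
        rw [h2] at h3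
        simp at h3
      simp only [if_neg hne]
      rw [hist_map]
      rfl
  constructor
  · intro i
    rw [hg i, hg (i + 1)]
    cases i with
    | zero =>
      refine ⟨hymem, hyne, ?_⟩
      apply vecLt_of_natLt_msup
      have h1 := (hmcond 0).1
      exact ((mem_cut b).mp ((inf_le_right : Y 1 ⊓ cut b (msup b (F (Y 0))) ≤ cut b _) h1))
    | succ i =>
      obtain ⟨h1, h2, h3⟩ := hmcond i
      exact ⟨(inf_le_left : Y (i + 1) ⊓ cut b (msup b (F (Y 0))) ≤ Y (i + 1)) h1, h2, h3⟩
  · have heq : (fun i => (fun l => match l with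
      | [] => (0 : E)
      | Z₀ :: rest =>
          if rest.isEmpty then F Z₀
          else σs Z₀ (rest.map (fun Z => Z ⊓ cut b (msup b (F Z₀))))) (hist Y (i + 1))) =
        scons (F (Y 0)) (fun i => σs (Y 0) (hist Y' (i + 1))) := by
      funext i
      exact hg i
    rw [heq, ← prefCat_snoc]
    exact hmout
end Games
section Chain

open Submodule Set

variable {𝔽 : Type} [Field 𝔽] {E : Type} [AddCommGroup E] [Module 𝔽 E]
variable (b : Module.Basis ℕ 𝔽 E) (U : Set (ℕ → E)) (z : List E)

/-- `AccQ p X`: II wins Gowers' game below `X` from position `z ++ p`, playing into `U`. -/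
def AccQ (p : List E) (X : Submodule 𝔽 E) : Prop := IIWinsG b X (z ++ p) U

/-- `HeredQ p C`: below `C`, every one-step extension of `p` is hereditarily rejected. -/
def HeredQ (p : List E) (C : Submodule 𝔽 E) : Prop :=
  ∀ y ∈ C, y ≠ 0 → ∀ Y : Submodule 𝔽 E, IsBlockSubspace b Y → Y ≤ C →
    ¬ AccQ b U z (p ++ [y]) Y

/-- The shrinking condition processed at each stage of the fusion. -/
def shrinkP (t : List E × Bool) (X C : Submodule 𝔽 E) : Prop :=
  IsBlockSubspace b C ∧ C ≤ X ∧ (if t.2 then AccQ b U z t.1 C else HeredQ b U z t.1 C)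

variable (V : Submodule 𝔽 E) (τ : ℕ → List E × Bool)

open Classical in
/-- The fusion chain of block subspaces. -/
noncomputable def chain : ℕ → Submodule 𝔽 E
  | 0 => V
  | s + 1 =>
    if h : ∃ C, shrinkP b U z (τ s) (chain s) C then h.choose else chain s

theorem chain_le_succ (s : ℕ) : chain b U z V τ (s + 1) ≤ chain b U z V τ s := by
  rw [chain]
  split
  · next h => exact h.choose_spec.2.1
  · exact le_rfl

theorem chain_mono {s t : ℕ} (h : s ≤ t) : chain b U z V τ t ≤ chain b U z V τ s := by
  induction h with
  | refl => exact le_rfl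
  | step _ ih => exact le_trans (chain_le_succ b U z V τ _) ih

theorem chain_le_V (s : ℕ) : chain b U z V τ s ≤ V :=
  chain_mono b U z V τ (Nat.zero_le s)

theorem chain_spec {s : ℕ} (h : ∃ C, shrinkP b U z (τ s) (chain b U z V τ s) C) :
    shrinkP b U z (τ s) (chain b U z V τ s) (chain b U z V τ (s + 1)) := by
  rw [chain, dif_pos h]
  exact h.choose_spec

theorem chain_isBlock (hV : IsBlockSubspace b V) :
    ∀ s, IsBlockSubspace b (chain b U z V τ s) := by
  intro s
  induction s with
  | zero => exact hV
  | succ s ih =>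
    rw [chain]
    split
    · next h => exact h.choose_spec.1
    · exact ih

open Classical in
/-- The diagonal block sequence through the chain, with running support bounds. -/
noncomputable def wAux : ℕ → E × ℕ
  | 0 =>
    if h : ∃ v, v ∈ chain b U z V τ 1 ∧ v ≠ 0 ∧ NatLt b 0 v then
      (h.choose, msup b h.choose + 1)
    else (0, 0)
  | s + 1 =>
    if h : ∃ v, v ∈ chain b U z V τ (s + 2) ∧ v ≠ 0 ∧ NatLt b (wAux s).2 v then
      (h.choose, max (wAux s).2 (msup b h.choose) + 1)
    else (0, (wAux s).2)

/-- The diagonal vectors. -/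
noncomputable def wv (s : ℕ) : E := (wAux b U z V τ s).1

/-- The running bounds. -/
noncomputable def bnd (s : ℕ) : ℕ := (wAux b U z V τ s).2

theorem wv_spec (hV : IsBlockSubspace b V) :
    ∀ s, wv b U z V τ s ∈ chain b U z V τ (s + 1) ∧ wv b U z V τ s ≠ 0 ∧
    msup b (wv b U z V τ s) < bnd b U z V τ s ∧
    ∀ t, s = t + 1 → NatLt b (bnd b U z V τ t) (wv b U z V τ s) ∧
      bnd b U z V τ t < bnd b U z V τ s := by
  intro s
  cases s with
  | zero =>
    have hex : ∃ v, v ∈ chain b U z V τ 1 ∧ v ≠ 0 ∧ NatLt b 0 v :=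
      infdim_exists_highvec b _ (isBlockSubspace_infdim b (chain_isBlock b U z V τ hV 1)) 0
    obtain ⟨h1, h2, h3⟩ := hex.choose_spec
    rw [wv, bnd, wAux, dif_pos hex]
    dsimp only
    exact ⟨h1, h2, by omega, fun t ht => by omega⟩
  | succ s =>
    have hex : ∃ v, v ∈ chain b U z V τ (s + 2) ∧ v ≠ 0 ∧
        NatLt b (wAux b U z V τ s).2 v :=
      infdim_exists_highvec b _
        (isBlockSubspace_infdim b (chain_isBlock b U z V τ hV (s + 2))) _
    obtain ⟨h1, h2, h3⟩ := hex.choose_spec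
    rw [wv, bnd, wAux, dif_pos hex]
    dsimp only
    refine ⟨h1, h2, Nat.lt_succ_of_le (le_max_right _ _), ?_⟩
    intro t ht
    have hts : t = s := by omega
    subst hts
    refine ⟨?_, Nat.lt_succ_of_le (le_max_left _ _)⟩
    rw [bnd]
    exact h3

theorem bnd_mono (hV : IsBlockSubspace b V) {s t : ℕ} (h : s ≤ t) :
    bnd b U z V τ s ≤ bnd b U z V τ t := by
  induction h with
  | refl => exact le_rfl
  | @step t' h' ih =>
    have := ((wv_spec b U z V τ hV (t' + 1)).2.2.2 t' rfl).2
    simp only [Nat.succ_eq_add_one] at *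
    omega

theorem wv_blockSeq (hV : IsBlockSubspace b V) : IsBlockSeq b (wv b U z V τ) := by
  constructor
  · intro s; exact (wv_spec b U z V τ hV s).2.1
  · intro s
    have h1 := (wv_spec b U z V τ hV s).2.2.1
    have h2 := ((wv_spec b U z V τ hV (s + 1)).2.2.2 s rfl).1
    intro m hm n hn
    have := le_msup b hm
    have := h2 n hn
    omega

/-- The fusion block subspace. -/
noncomputable def Wb : Submodule 𝔽 E := Submodule.span 𝔽 (Set.range (wv b U z V τ))

/-- Its tails. -/
noncomputable def Wtail (m : ℕ) : Submodule 𝔽 E :=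
  Submodule.span 𝔽 (wv b U z V τ '' Set.Ici m)

theorem wb_isBlock (hV : IsBlockSubspace b V) : IsBlockSubspace b (Wb b U z V τ) :=
  ⟨wv b U z V τ, wv_blockSeq b U z V τ hV, rfl⟩

theorem wtail_isBlock (hV : IsBlockSubspace b V) (m : ℕ) :
    IsBlockSubspace b (Wtail b U z V τ m) := by
  refine ⟨fun j => wv b U z V τ (m + j), ⟨?_, ?_⟩, ?_⟩
  · intro j; exact (wv_spec b U z V τ hV (m + j)).2.1
  · intro j
    exact (wv_blockSeq b U z V τ hV).2 (m + j)
  · rw [Wtail]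
    congr 1
    ext v
    constructor
    · rintro ⟨k, hk, rfl⟩
      refine ⟨k - m, ?_⟩
      dsimp only
      rw [Nat.add_sub_cancel' (Set.mem_Ici.mp hk)]
    · rintro ⟨j, rfl⟩
      exact ⟨m + j, by simp, rfl⟩

theorem wtail_le_chain (hV : IsBlockSubspace b V) (m : ℕ) :
    Wtail b U z V τ m ≤ chain b U z V τ m := by
  rw [Wtail, Submodule.span_le]
  rintro v ⟨k, hk, rfl⟩
  exact chain_mono b U z V τ (Nat.le_succ_of_le (Set.mem_Ici.mp hk))
    ((wv_spec b U z V τ hV k).1)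

theorem wtail_le_wb (m : ℕ) : Wtail b U z V τ m ≤ Wb b U z V τ := by
  rw [Wtail, Wb, Submodule.span_le]
  rintro v ⟨k, _, rfl⟩
  exact Submodule.subset_span ⟨k, rfl⟩

theorem wb_le_V (hV : IsBlockSubspace b V) : Wb b U z V τ ≤ V := by
  rw [Wb, Submodule.span_le]
  rintro v ⟨k, rfl⟩
  exact chain_le_V b U z V τ (k + 1) ((wv_spec b U z V τ hV k).1)

theorem mem_wtail (hV : IsBlockSubspace b V) {v : E} (hv : v ∈ Wb b U z V τ) {m : ℕ}
    (hhigh : NatLt b (bnd b U z V τ m) v) : v ∈ Wtail b U z V τ m := by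
  apply mem_span_tail b (wv_blockSeq b U z V τ hV) hv _ hhigh
  intro j hj
  have h1 := (wv_spec b U z V τ hV j).2.2.1
  have h2 := bnd_mono b U z V τ hV (le_of_lt hj)
  omega

theorem cut_le_wtail (hV : IsBlockSubspace b V) {Z : Submodule 𝔽 E}
    (hZ : Z ≤ Wb b U z V τ) (m : ℕ) :
    Z ⊓ cut b (bnd b U z V τ m) ≤ Wtail b U z V τ m := by
  rintro v ⟨hv1, hv2⟩
  exact mem_wtail b U z V τ hV (hZ hv1) hv2

/-- Any block subspace of `Wb` contains a block subspace inside any tail. -/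
theorem block_tail_le (hV : IsBlockSubspace b V) {Y : Submodule 𝔽 E}
    (hY : IsBlockSubspace b Y) (hYW : Y ≤ Wb b U z V τ) (m : ℕ) :
    ∃ Y' : Submodule 𝔽 E, IsBlockSubspace b Y' ∧ Y' ≤ Y ∧ Y' ≤ Wtail b U z V τ m := by
  obtain ⟨u, hu, rfl⟩ := hY
  set k := bnd b U z V τ m + 1 with hk
  refine ⟨Submodule.span 𝔽 (Set.range (fun i => u (k + i))), ?_, ?_, ?_⟩
  · exact ⟨fun i => u (k + i), ⟨fun i => hu.1 _, fun i => hu.2 (k + i)⟩, rfl⟩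
  · rw [Submodule.span_le]
    rintro v ⟨i, rfl⟩
    exact Submodule.subset_span ⟨k + i, rfl⟩
  · rw [Submodule.span_le]
    rintro v ⟨i, rfl⟩
    apply mem_wtail b U z V τ hV
    · exact hYW (Submodule.subset_span ⟨k + i, rfl⟩)
    · intro n hn
      have := hu.le_supp (k + i) n hn
      omega

end Chain
section Main

open Submodule Set

variable {𝔽 : Type} [Field 𝔽] {E : Type} [AddCommGroup E] [Module 𝔽 E]
variable (b : Module.Basis ℕ 𝔽 E) (U : Set (ℕ → E)) (z : List E)
variable (V : Submodule 𝔽 E) (τ : ℕ → List E × Bool)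

/-- Once some block subspace of `Wb` accepts `p`, `Wb` itself accepts `p`. -/
theorem acc_upgrade (hV : IsBlockSubspace b V) (hτ : Function.Surjective τ)
    {p : List E} {Y : Submodule 𝔽 E} (hY : IsBlockSubspace b Y)
    (hYW : Y ≤ Wb b U z V τ) (hAcc : AccQ b U z p Y) :
    AccQ b U z p (Wb b U z V τ) := by
  obtain ⟨t₀, ht₀⟩ := hτ (p, true)
  have hex : ∃ C, shrinkP b U z (τ t₀) (chain b U z V τ t₀) C := by
    obtain ⟨Y', hY'b, hY'Y, hY'tail⟩ := block_tail_le b U z V τ hV hY hYW t₀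
    refine ⟨Y', ?_⟩
    rw [ht₀]
    exact ⟨hY'b, le_trans hY'tail (wtail_le_chain b U z V τ hV t₀),
      IIWinsG.mono hAcc hY'Y⟩
  have hsp := chain_spec b U z V τ hex
  rw [ht₀] at hsp
  have hAccC : AccQ b U z p (chain b U z V τ (t₀ + 1)) := hsp.2.2
  rw [AccQ] at hAccC ⊢
  apply hAccC.of_cut (bnd b U z V τ (t₀ + 1))
  intro Z hZ
  exact le_trans (cut_le_wtail b U z V τ hV hZ (t₀ + 1))
    (wtail_le_chain b U z V τ hV (t₀ + 1))

/-- `p` is (hereditarily) rejected if no block subspace of `Wb` accepts it. -/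
def Rej (p : List E) : Prop :=
  ∀ Y : Submodule 𝔽 E, IsBlockSubspace b Y → Y ≤ Wb b U z V τ → ¬ AccQ b U z p Y

/-- The bound guaranteeing the hereditary rejection step at position `q`. -/
noncomputable def nbd (hτ : Function.Surjective τ) (q : List E) : ℕ :=
  bnd b U z V τ ((hτ (q, false)).choose + 1)

/-- The key step for player I: rejected positions can be extended to rejected
positions by playing far enough out in `Wb`. -/
theorem rej_step (hV : IsBlockSubspace b V) (hτ : Function.Surjective τ)
    {p : List E} (hp : Rej b U z V τ p) {y : E} (hyW : y ∈ Wb b U z V τ)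
    (hyne : y ≠ 0) (hylt : NatLt b (nbd b U z V τ hτ p) y) :
    Rej b U z V τ (p ++ [y]) := by
  set t := (hτ (p, false)).choose with htdef
  have ht : τ t = (p, false) := (hτ (p, false)).choose_spec
  have hex : ∃ C, shrinkP b U z (τ t) (chain b U z V τ t) C := by
    by_contra hno
    push_neg at hno
    apply hp (Wb b U z V τ) (wb_isBlock b U z V τ hV) le_rfl
    rw [AccQ]
    apply iiwins_of_dense
    intro Z hZW hZinf
    have hcut : Z ⊓ cut b (bnd b U z V τ t) ≤ chain b U z V τ t :=
      le_trans (cut_le_wtail b U z V τ hV hZW t) (wtail_le_chain b U z V τ hV t)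
    have hcutinf := infdim_inf_cut b Z hZinf (bnd b U z V τ t)
    obtain ⟨C, hCb, hCZ, -⟩ :=
      infdim_exists_blockSubspace b (Z ⊓ cut b (bnd b U z V τ t)) hcutinf 0
    have hCchain : C ≤ chain b U z V τ t := le_trans hCZ hcut
    have hnH : ¬ HeredQ b U z p C := by
      intro hH
      apply hno C
      rw [ht]
      exact ⟨hCb, hCchain, hH⟩
    rw [HeredQ] at hnH
    push_neg at hnH
    obtain ⟨y, hyC, hyne, Yw, hYwb, hYwC, hAccy⟩ := hnH
    refine ⟨y, (hCZ hyC).1, hyne, ?_⟩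
    have hYwWb : Yw ≤ Wb b U z V τ :=
      le_trans hYwC (le_trans hCZ (le_trans inf_le_left hZW))
    have hup := acc_upgrade b U z V τ hV hτ hYwb hYwWb hAccy
    rw [AccQ, ← List.append_assoc] at hup
    exact hup
  have hsp := chain_spec b U z V τ hex
  rw [ht] at hsp
  have hH : HeredQ b U z p (chain b U z V τ (t + 1)) := hsp.2.2
  intro Yb hYbblock hYbWb hAccExt
  have hymem : y ∈ chain b U z V τ (t + 1) :=
    (wtail_le_chain b U z V τ hV (t + 1)) (mem_wtail b U z V τ hV hyW hylt)
  obtain ⟨Y', hY'b, hY'Y, hY'tail⟩ := block_tail_le b U z V τ hV hYbblock hYbWb (t + 1)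
  have hY'chain : Y' ≤ chain b U z V τ (t + 1) :=
    le_trans hY'tail (wtail_le_chain b U z V τ hV (t + 1))
  exact hH y hymem hyne Y' hY'b hY'chain (IIWinsG.mono hAccExt hY'Y)

/-- A rejected position cannot have all its extensions inside `U`. -/
theorem rej_not_cyl (hV : IsBlockSubspace b V) {p : List E} (hp : Rej b U z V τ p) :
    ¬ ∀ f : ℕ → E, prefCat (z ++ p) f ∈ U := by
  intro hcyl
  exact hp (Wb b U z V τ) (wb_isBlock b U z V τ hV) le_rfl
    (iiwins_of_cyl b (Wb b U z V τ) (z ++ p) U hcyl)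

open Classical in
/-- Player I's strategy in the asymptotic game. -/
noncomputable def gF (hτ : Function.Surjective τ) : List E → ℕ
  | [] => nbd b U z V τ hτ []
  | a :: tl => max (gF hτ tl + 1) (nbd b U z V τ hτ ((a :: tl).reverse))

theorem gF_ge (hτ : Function.Surjective τ) :
    ∀ r : List E, nbd b U z V τ hτ r.reverse ≤ gF b U z V τ hτ r := by
  intro r
  cases r with
  | nil => exact le_rfl
  | cons a tl => rw [gF]; exact le_max_right _ _

end Main
set_option maxHeartbeats 1000000 in
theorem isOpen_strategicallyRamsey
    {𝔽 : Type} [Field 𝔽] [Countable 𝔽]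
    {E : Type} [AddCommGroup E] [Module 𝔽 E]
    [TopologicalSpace E] [DiscreteTopology E]
    (b : Module.Basis ℕ 𝔽 E) (U : Set (ℕ → E)) (hU : IsOpen U) :
    StrategicallyRamsey b U := by
  classical
  intro V hV z _hz
  haveI : Countable E := (b.repr.injective).countable
  obtain ⟨τ, hτ⟩ := exists_surjective_nat (List E × Bool)
  by_cases hrej : Rej b U z V τ []
  · -- player I has a strategy in the asymptotic game below `Wb` to avoid `U`
    refine ⟨Wb b U z V τ, wb_le_V b U z V τ hV, wb_isBlock b U z V τ hV, Or.inr ?_⟩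
    refine ⟨fun l => gF b U z V τ hτ l.reverse, ?_⟩
    intro x hx
    have hσs : ∀ i, gF b U z V τ hτ (hist x (i + 1)).reverse =
        max (gF b U z V τ hτ (hist x i).reverse + 1) (nbd b U z V τ hτ (hist x (i + 1))) := by
      intro i
      rw [hist_reverse_succ, gF]
      congr 2
      rw [List.reverse_cons, List.reverse_reverse, ← hist_succ]
    have hnb : ∀ i, nbd b U z V τ hτ (hist x i) ≤ gF b U z V τ hτ (hist x i).reverse := by
      intro i
      have := gF_ge b U z V τ hτ (hist x i).reverse
      rwa [List.reverse_reverse] at this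
    have hR : ∀ i, Rej b U z V τ (hist x i) := by
      intro i
      induction i with
      | zero =>
        have h0 : hist x 0 = [] := hist_zero x
        rw [h0]
        exact hrej
      | succ i ih =>
        rw [hist_succ]
        apply rej_step b U z V τ hV hτ ih (hx i).1 (hx i).2.1
        exact natLt_mono b (hnb i) (hx i).2.2.1
    constructor
    · intro i
      have := hσs i
      dsimp only
      rw [this]
      exact lt_of_lt_of_le (Nat.lt_succ_self _) (le_max_left _ _)
    · intro hmem
      obtain ⟨I, uu, h1, h2⟩ := (isOpen_pi_iff.mp hU) _ hmem
      set N := (I.sup id) + 1 + z.length with hN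
      set i₀ := N - z.length with hi₀
      apply rej_not_cyl b U z V τ hV (hR i₀)
      intro f
      apply h2
      intro a ha
      have haI : a ∈ I := ha
      have haN : a < N := by
        have := Finset.le_sup (f := id) haI
        simp only [id] at this
        omega
      have hlen : (z ++ hist x i₀).length = N := by
        rw [List.length_append, hist_length]
        omega
      have hcoord : prefCat (z ++ hist x i₀) f a = prefCat z x a := by
        rw [prefCat_lt _ _ (by omega : a < (z ++ hist x i₀).length)]
        by_cases hz : a < z.length
        · rw [prefCat_lt _ _ hz]
          exact List.getElem_append_left hz
        · push_neg at hz
          rw [prefCat_ge _ _ hz]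
          rw [List.getElem_append_right hz]
          exact hist_getElem x i₀ (a - z.length) (by rw [hist_length]; omega)
      show prefCat (z ++ hist x i₀) f a ∈ uu a
      rw [hcoord]
      exact (h1 a haI).2
  · -- some block subspace accepts the empty position: II wins Gowers' game there
    simp only [Rej] at hrej
    push_neg at hrej
    obtain ⟨Y, hYb, hYW, hYacc⟩ := hrej
    refine ⟨Y, le_trans hYW (wb_le_V b U z V τ hV), hYb, Or.inl ?_⟩
    rw [AccQ, List.append_nil] at hYacc
    exact hYacc
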